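/- arXiv:1504.06501 — 2 statements merged into one kernel-verified Lean document; each statement's English description precedes it below -/
import Mathlib

section
/- Every run written by the greedy run-generation algorithm with buffer size M, except possibly its last two runs, has length at least M + ⌈⌊M/2⌋/2⌉. -/
namespace RunGen

variable {α : Type*} [LinearOrder α]

/-- A run: a contiguous monotone (nondecreasing or nonincreasing) block. -/
def IsRun (l : List α) : Prop := l.Chain' (· ≤ ·) ∨ l.Chain' (· ≥ ·)

/-- `S` can be partitioned into `n` contiguous runs. -/
def RunsInto (S : List α) (n : ℕ) : Prop :=
  ∃ P : List (List α), P.flatten = S ∧ P.length = n ∧ ∀ r ∈ P, IsRun r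

/-- `R S` is the minimum number of contiguous runs into which `S` can be partitioned. -/
noncomputable def R (S : List α) : ℕ := sInf {n | RunsInto S n}

/-- `S` is an `M`-feasible output of the input `I`: `S` is a rearrangement of `I` in which
the element written at (0-indexed) step `t` lies among the first `M + t` input elements
(a size-`M` buffer refilled after each write). -/
def IsFeasibleOutput (M : ℕ) (I S : List α) : Prop :=
  S.length = I.length ∧
    ∃ σ : Fin I.length ≃ Fin I.length,
      ∀ t : Fin I.length, S[(t : ℕ)]? = I[(σ t : ℕ)]? ∧ (σ t : ℕ) < M + (t : ℕ)

/-- `OPT M I` is the minimum of `R S` over all `M`-feasible outputs `S` of `I`. -/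
noncomputable def OPT (M : ℕ) (I : List α) : ℕ :=
  sInf {n | ∃ S : List α, IsFeasibleOutput M I S ∧ RunsInto S n}

/-- The smallest buffered element that can continue an increasing run whose last written
element is `last?` (`none` at the start of a run, where the smallest element is chosen). -/
def nextUp (last? : Option α) (B : List α) : Option α :=
  match last? with
  | none => B.min?
  | some l => (B.filter fun x => decide (l ≤ x)).min?

/-- The largest buffered element that can continue a decreasing run. -/
def nextDown (last? : Option α) (B : List α) : Option α :=
  match last? with
  | none => B.max?
  | some l => (B.filter fun x => decide (x ≤ l)).max?

/-- Writing the maximal increasing run from buffer `B` (in arrival order) and remaining input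
`J` (`fuel` bounds the number of steps; `B.length + J.length` always suffices).  After each
write the next input element, if any, is ingested.  Returns
`(run written, final buffer in arrival order, final remaining input)`. -/
def incAux : ℕ → Option α → List α → List α → List α × List α × List α
  | 0, _, B, J => ([], B, J)
  | fuel + 1, last?, B, J =>
    match nextUp last? B with
    | none => ([], B, J)
    | some x =>
      let res := incAux fuel (some x) (B.erase x ++ J.take 1) (J.drop 1)
      (x :: res.1, res.2.1, res.2.2)

/-- Writing the maximal decreasing run; see `incAux`. -/
def decAux : ℕ → Option α → List α → List α → List α × List α × List α
  | 0, _, B, J => ([], B, J)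
  | fuel + 1, last?, B, J =>
    match nextDown last? B with
    | none => ([], B, J)
    | some x =>
      let res := decAux fuel (some x) (B.erase x ++ J.take 1) (J.drop 1)
      (x :: res.1, res.2.1, res.2.2)

/-- The maximal increasing run from the state `(B, J)`. -/
def maxIncRun (B J : List α) : List α := (incAux (B.length + J.length) none B J).1

/-- The state (buffer in arrival order, remaining input) after writing the maximal
increasing run from `(B, J)`. -/
def incState (B J : List α) : List α × List α := (incAux (B.length + J.length) none B J).2

/-- The maximal decreasing run from the state `(B, J)`. -/
def maxDecRun (B J : List α) : List α := (decAux (B.length + J.length) none B J).1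

/-- The state after writing the maximal decreasing run from `(B, J)`. -/
def decState (B J : List α) : List α × List α := (decAux (B.length + J.length) none B J).2

/-- The maximal run in direction `d` (`true` = increasing, `false` = decreasing). -/
def dirRun (d : Bool) (B J : List α) : List α := if d then maxIncRun B J else maxDecRun B J

/-- The state after writing the maximal run in direction `d`. -/
def dirState (d : Bool) (B J : List α) : List α × List α :=
  if d then incState B J else decState B J

/-- `Writes B J S B' J'`: from the state with buffer `B` (in arrival order) and remaining
input `J`, an algorithm can write exactly the sequence `S` (each written element is removed
from the buffer, and the next input element, if any, is then ingested), ending at the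
state `(B', J')`. -/
inductive Writes : List α → List α → List α → List α → List α → Prop
  | nil (B J : List α) : Writes B J [] B J
  | step (B J : List α) (i : ℕ) (S B' J' : List α) (h : i < B.length)
      (hrest : Writes (B.eraseIdx i ++ J.take 1) (J.drop 1) S B' J') :
      Writes B J (B[i]'h :: S) B' J'

/-- `ProperWrites B J P B' J'`: from state `(B, J)`, a proper algorithm (one that always
writes maximal runs) can write the list of runs `P`, ending at state `(B', J')`. -/
inductive ProperWrites : List α → List α → List (List α) → List α → List α → Prop
  | nil (B J : List α) : ProperWrites B J [] B J
  | step (d : Bool) (B J : List α) (P : List (List α)) (B' J' : List α) (hB : B ≠ [])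
      (h : ProperWrites (dirState d B J).1 (dirState d B J).2 P B' J') :
      ProperWrites B J (dirRun d B J :: P) B' J'

/-- An increasing run writable from the state `(B, J)`, the last written element being
`last?`: each written element is currently buffered and is `≥` the previously written
element, and after each write the next input element (if any) is ingested. -/
inductive IncRunFrom : Option α → List α → List α → List α → Prop
  | nil (last? : Option α) (B J : List α) : IncRunFrom last? B J []
  | cons (last? : Option α) (B J : List α) (x : α) (r : List α) (hx : x ∈ B)
      (hle : ∀ l ∈ last?, l ≤ x)
      (h : IncRunFrom (some x) (B.erase x ++ J.take 1) (J.drop 1) r) :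
      IncRunFrom last? B J (x :: r)

/-- A decreasing run writable from the state `(B, J)`; see `IncRunFrom`. -/
inductive DecRunFrom : Option α → List α → List α → List α → Prop
  | nil (last? : Option α) (B J : List α) : DecRunFrom last? B J []
  | cons (last? : Option α) (B J : List α) (x : α) (r : List α) (hx : x ∈ B)
      (hge : ∀ l ∈ last?, x ≤ l)
      (h : DecRunFrom (some x) (B.erase x ++ J.take 1) (J.drop 1) r) :
      DecRunFrom last? B J (x :: r)

/-- The optimal number of runs over all ways of writing out everything from state `(B, J)`. -/
noncomputable def OPTFrom (B J : List α) : ℕ :=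
  sInf {n | ∃ S : List α, Writes B J S [] [] ∧ RunsInto S n}

/-- Running a deterministic online algorithm `A`: at each step, given the current buffer
(in arrival order) and the output written so far, `A` chooses (the index of) the buffered
element to write next; the next input element is then ingested. -/
def runAlg (A : List α → List α → ℕ) : ℕ → List α → List α → List α → List α
  | 0, _, _, _ => []
  | fuel + 1, W, B, J =>
    match B with
    | [] => []
    | b :: Bt =>
      let i := A (b :: Bt) W % (b :: Bt).length
      let x := (b :: Bt).getD i b
      x :: runAlg A fuel (W ++ [x]) ((b :: Bt).eraseIdx i ++ J.take 1) (J.drop 1)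

/-- The output of the deterministic online algorithm `A` run with buffer size `M` on
input `I`. -/
def onlineOutput (A : List α → List α → ℕ) (M : ℕ) (I : List α) : List α :=
  runAlg A I.length [] (I.take M) (I.drop M)

/-- Running a deterministic algorithm with `v`-lookahead: its choice of which buffered
element to write may additionally depend on the next `v` not-yet-read input elements. -/
def runAlgVis (A : List α → List α → List α → ℕ) (v : ℕ) :
    ℕ → List α → List α → List α → List α
  | 0, _, _, _ => []
  | fuel + 1, W, B, J =>
    match B with
    | [] => []
    | b :: Bt =>
      let i := A (b :: Bt) W (J.take v) % (b :: Bt).length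
      let x := (b :: Bt).getD i b
      x :: runAlgVis A v fuel (W ++ [x]) ((b :: Bt).eraseIdx i ++ J.take 1) (J.drop 1)

/-- The output of the deterministic algorithm `A` with buffer size `M` and `v`-lookahead. -/
def visOutput (A : List α → List α → List α → ℕ) (v M : ℕ) (I : List α) : List α :=
  runAlgVis A v I.length [] (I.take M) (I.drop M)

/-- Alternating up-down replacement selection from a state (starting with an increasing
run when `d = true`), writing maximal runs of strictly alternating directions. -/
def altAux : ℕ → Bool → List α → List α → List α
  | 0, _, _, _ => []
  | fuel + 1, d, B, J =>
    if B = [] then []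
    else dirRun d B J ++ altAux fuel (!d) (dirState d B J).1 (dirState d B J).2

/-- The output of alternating up-down replacement selection with buffer size `M` on `I`. -/
def altOutput (M : ℕ) (I : List α) : List α :=
  altAux (I.length + 1) true (I.take M) (I.drop M)

/-- `GreedyRuns B J P`: `P` is the list of runs written by (some tie-breaking of) the
greedy algorithm from state `(B, J)`: at each decision point it writes the longer of the
two possible maximal runs (ties broken arbitrarily). -/
inductive GreedyRuns : List α → List α → List (List α) → Prop
  | nil : GreedyRuns [] [] []
  | step (d : Bool) (B J : List α) (P : List (List α)) (hB : B ≠ [])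
      (hlen : (dirRun (!d) B J).length ≤ (dirRun d B J).length)
      (h : GreedyRuns (dirState d B J).1 (dirState d B J).2 P) :
      GreedyRuns B J (dirRun d B J :: P)

/-- `PTASOut k B J S`: `S` is a possible output of the phase-based offline approximation
algorithm with parameter `k` from state `(B, J)`: while more than `k` runs remain, it
selects a sequence of `k` consecutive maximal runs writing the longest total number of
elements and writes them, followed by one additional maximal run; once everything can be
written in at most `k` (maximal) runs, it finishes using the fewest possible runs. -/
inductive PTASOut (k : ℕ) : List α → List α → List α → Prop
  | final (B J : List α) (P : List (List α)) (hP : ProperWrites B J P [] [])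
      (hk : P.length ≤ k)
      (hmin : ∀ Q : List (List α), ProperWrites B J Q [] [] → P.length ≤ Q.length) :
      PTASOut k B J P.flatten
  | phase (B J : List α) (P : List (List α)) (B' J' : List α) (r : List α)
      (B'' J'' : List α) (S : List α)
      (hnf : ¬∃ Q : List (List α), ProperWrites B J Q [] [] ∧ Q.length ≤ k)
      (hP : ProperWrites B J P B' J') (hPk : P.length = k)
      (hmax : ∀ (Q : List (List α)) (BQ JQ : List α),
        ProperWrites B J Q BQ JQ → Q.length = k → Q.flatten.length ≤ P.flatten.length)
      (hr : ProperWrites B' J' [r] B'' J'') (hS : PTASOut k B'' J'' S) :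
      PTASOut k B J (P.flatten ++ (r ++ S))

/-- An input is `c`-nearly-sorted (for buffer size `M`) if some proper optimal output
consists entirely of runs of length at least `c * M`. -/
def NearlySorted (c M : ℕ) (I : List α) : Prop :=
  ∃ P : List (List α), ProperWrites (I.take M) (I.drop M) P [] [] ∧
    R P.flatten = OPT M I ∧ ∀ r ∈ P, c * M ≤ r.length

end RunGen

open RunGen

namespace StmtNine
open RunGen List

variable {α : Type*} [LinearOrder α]

local instance : Std.Antisymm ((· ≤ ·) : α → α → Prop) := ⟨fun _ _ h1 h2 => le_antisymm h1 h2⟩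

lemma min?_spec {l : List α} {a : α} (h : l.min? = some a) : a ∈ l ∧ ∀ b ∈ l, a ≤ b :=
  List.min?_eq_some_iff.1 h

lemma max?_spec {l : List α} {a : α} (h : l.max? = some a) : a ∈ l ∧ ∀ b ∈ l, b ≤ a :=
  List.max?_eq_some_iff.1 h

lemma countP_disjoint (p q : α → Bool) (l : List α)
    (h : ∀ a ∈ l, p a = true → q a = true → False) :
    l.countP p + l.countP q ≤ l.length := by
  induction l with
  | nil => simp
  | cons x t ih =>
    simp only [List.countP_cons, List.length_cons]
    have h1 := h x (by simp)
    have h2 := ih (fun a ha => h a (by simp [ha]))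
    rcases hp : p x <;> rcases hq : q x <;> simp_all <;> omega

/-- eligibility for increasing runs -/
def eligU : Option α → α → Bool
  | none, _ => true
  | some l, b => decide (l ≤ b)

/-- eligibility for decreasing runs -/
def eligD : Option α → α → Bool
  | none, _ => true
  | some l, b => decide (b ≤ l)

lemma countP_eligU_none (B : List α) : B.countP (eligU none) = B.length :=
  List.countP_eq_length.2 (fun _ _ => rfl)

lemma countP_eligD_none (B : List α) : B.countP (eligD none) = B.length :=
  List.countP_eq_length.2 (fun _ _ => rfl)

lemma nextUp_some {last? : Option α} {B : List α} {x : α} (h : nextUp last? B = some x) :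
    x ∈ B ∧ eligU last? x = true ∧ ∀ b ∈ B, eligU last? b = true → x ≤ b := by
  cases last? with
  | none =>
    obtain ⟨hm, hle⟩ := min?_spec h
    exact ⟨hm, rfl, fun b hb _ => hle b hb⟩
  | some l =>
    obtain ⟨hm, hle⟩ := min?_spec h
    rw [List.mem_filter] at hm
    refine ⟨hm.1, hm.2, fun b hb he => hle b (List.mem_filter.2 ⟨hb, he⟩)⟩

lemma nextDown_some {last? : Option α} {B : List α} {x : α} (h : nextDown last? B = some x) :
    x ∈ B ∧ eligD last? x = true ∧ ∀ b ∈ B, eligD last? b = true → b ≤ x := by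
  cases last? with
  | none =>
    obtain ⟨hm, hle⟩ := max?_spec h
    exact ⟨hm, rfl, fun b hb _ => hle b hb⟩
  | some l =>
    obtain ⟨hm, hle⟩ := max?_spec h
    rw [List.mem_filter] at hm
    refine ⟨hm.1, hm.2, fun b hb he => hle b (List.mem_filter.2 ⟨hb, he⟩)⟩

lemma nextUp_none {last? : Option α} {B : List α} (h : nextUp last? B = none) :
    B.countP (eligU last?) = 0 := by
  cases last? with
  | none =>
    rw [show nextUp none B = B.min? from rfl, List.min?_eq_none_iff] at h
    simp [h]
  | some l =>
    rw [show nextUp (some l) B = (B.filter fun x => decide (l ≤ x)).min? from rfl,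
      List.min?_eq_none_iff] at h
    have : B.countP (fun x => decide (l ≤ x)) = 0 := by
      rw [← List.length_eq_zero_iff, ← List.countP_eq_length_filter] at h
      exact h
    simpa [eligU] using this

lemma nextDown_none {last? : Option α} {B : List α} (h : nextDown last? B = none) :
    B.countP (eligD last?) = 0 := by
  cases last? with
  | none =>
    rw [show nextDown none B = B.max? from rfl, List.max?_eq_none_iff] at h
    simp [h]
  | some l =>
    rw [show nextDown (some l) B = (B.filter fun x => decide (x ≤ l)).max? from rfl,
      List.max?_eq_none_iff] at h
    have : B.countP (fun x => decide (x ≤ l)) = 0 := by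
      rw [← List.length_eq_zero_iff, ← List.countP_eq_length_filter] at h
      exact h
    simpa [eligD] using this

lemma incAux_succ_none {fuel : ℕ} {last? : Option α} {B J : List α}
    (h : nextUp last? B = none) : incAux (fuel + 1) last? B J = ([], B, J) := by
  simp [incAux, h]

lemma incAux_succ_some {fuel : ℕ} {last? : Option α} {B J : List α} {x : α}
    (h : nextUp last? B = some x) :
    incAux (fuel + 1) last? B J =
      (x :: (incAux fuel (some x) (B.erase x ++ J.take 1) (J.drop 1)).1,
        (incAux fuel (some x) (B.erase x ++ J.take 1) (J.drop 1)).2) := by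
  simp [incAux, h]

lemma decAux_succ_none {fuel : ℕ} {last? : Option α} {B J : List α}
    (h : nextDown last? B = none) : decAux (fuel + 1) last? B J = ([], B, J) := by
  simp [decAux, h]

lemma decAux_succ_some {fuel : ℕ} {last? : Option α} {B J : List α} {x : α}
    (h : nextDown last? B = some x) :
    decAux (fuel + 1) last? B J =
      (x :: (decAux fuel (some x) (B.erase x ++ J.take 1) (J.drop 1)).1,
        (decAux fuel (some x) (B.erase x ++ J.take 1) (J.drop 1)).2) := by
  simp [decAux, h]

/-- structure of the final state -/
lemma incAux_state : ∀ (fuel : ℕ) (last? : Option α) (B J : List α),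
    (incAux fuel last? B J).2.2 = J.drop (incAux fuel last? B J).1.length ∧
    (incAux fuel last? B J).1.length + (incAux fuel last? B J).2.1.length
      = B.length + min (incAux fuel last? B J).1.length J.length := by
  intro fuel
  induction fuel with
  | zero => intro last? B J; simp [incAux]
  | succ fuel ih =>
    intro last? B J
    rcases hx : nextUp last? B with _ | x
    · simp [incAux_succ_none hx]
    · rw [incAux_succ_some hx]
      have hmem := (nextUp_some hx).1
      have hBlen : 1 ≤ B.length := List.length_pos_iff.2 (List.ne_nil_of_mem hmem)
      have hB1 : (B.erase x ++ J.take 1).length = B.length - 1 + min 1 J.length := by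
        simp [List.length_erase_of_mem hmem, List.length_take]
      obtain ⟨h1, h2⟩ := ih (some x) (B.erase x ++ J.take 1) (J.drop 1)
      constructor
      · rw [h1, List.drop_drop]
        congr 1
        simp [Nat.add_comm]
      · rw [hB1] at h2
        simp only [List.length_cons, List.length_drop] at *
        omega

lemma decAux_state : ∀ (fuel : ℕ) (last? : Option α) (B J : List α),
    (decAux fuel last? B J).2.2 = J.drop (decAux fuel last? B J).1.length ∧
    (decAux fuel last? B J).1.length + (decAux fuel last? B J).2.1.length
      = B.length + min (decAux fuel last? B J).1.length J.length := by
  intro fuel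
  induction fuel with
  | zero => intro last? B J; simp [decAux]
  | succ fuel ih =>
    intro last? B J
    rcases hx : nextDown last? B with _ | x
    · simp [decAux_succ_none hx]
    · rw [decAux_succ_some hx]
      have hmem := (nextDown_some hx).1
      have hBlen : 1 ≤ B.length := List.length_pos_iff.2 (List.ne_nil_of_mem hmem)
      have hB1 : (B.erase x ++ J.take 1).length = B.length - 1 + min 1 J.length := by
        simp [List.length_erase_of_mem hmem, List.length_take]
      obtain ⟨h1, h2⟩ := ih (some x) (B.erase x ++ J.take 1) (J.drop 1)
      constructor
      · rw [h1, List.drop_drop]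
        congr 1
        simp [Nat.add_comm]
      · rw [hB1] at h2
        simp only [List.length_cons, List.length_drop] at *
        omega

/-- every element of an increasing run continuing `l` is `≥ l` -/
lemma incAux_mem_ge : ∀ (fuel : ℕ) (l : α) (B J : List α),
    ∀ y ∈ (incAux fuel (some l) B J).1, l ≤ y := by
  intro fuel
  induction fuel with
  | zero => intro l B J y hy; simp [incAux] at hy
  | succ fuel ih =>
    intro l B J y hy
    rcases hx : nextUp (some l) B with _ | x
    · rw [incAux_succ_none hx] at hy; simp at hy
    · rw [incAux_succ_some hx] at hy
      have hlx : l ≤ x := by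
        have := (nextUp_some hx).2.1
        simpa [eligU] using this
      rcases List.mem_cons.1 hy with rfl | hy'
      · exact hlx
      · exact le_trans hlx (ih x _ _ y hy')

lemma decAux_mem_le : ∀ (fuel : ℕ) (l : α) (B J : List α),
    ∀ y ∈ (decAux fuel (some l) B J).1, y ≤ l := by
  intro fuel
  induction fuel with
  | zero => intro l B J y hy; simp [decAux] at hy
  | succ fuel ih =>
    intro l B J y hy
    rcases hx : nextDown (some l) B with _ | x
    · rw [decAux_succ_none hx] at hy; simp at hy
    · rw [decAux_succ_some hx] at hy
      have hlx : x ≤ l := by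
        have := (nextDown_some hx).2.1
        simpa [eligD] using this
      rcases List.mem_cons.1 hy with rfl | hy'
      · exact hlx
      · exact le_trans (ih x _ _ y hy') hlx

/-- the count of buffer elements above the k-th written element -/
@[simp] lemma eligU_some (l b : α) : eligU (some l) b = decide (l ≤ b) := rfl
@[simp] lemma eligD_some (l b : α) : eligD (some l) b = decide (b ≤ l) := rfl

lemma incAux_count : ∀ (fuel : ℕ) (last? : Option α) (B J : List α) (d : α) (k : ℕ),
    k < (incAux fuel last? B J).1.length →
    B.countP (eligU last?) ≤
      B.countP (fun b => decide ((incAux fuel last? B J).1.getD k d ≤ b)) + k := by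
  intro fuel
  induction fuel with
  | zero => intro last? B J d k hk; simp [incAux] at hk
  | succ fuel ih =>
    intro last? B J d k hk
    rcases hx : nextUp last? B with _ | x
    · rw [incAux_succ_none hx] at hk; simp at hk
    · rw [incAux_succ_some hx] at hk ⊢
      obtain ⟨hmem, helig, hmin⟩ := nextUp_some hx
      cases k with
      | zero =>
        simp only [List.getD_cons_zero, Nat.add_zero]
        exact List.countP_mono_left
          (fun b hb hp => decide_eq_true (hmin b hb hp))
      | succ k =>
        simp only [List.length_cons, Nat.add_lt_add_iff_right] at hk
        simp only [List.getD_cons_succ]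
        set B1 := B.erase x ++ J.take 1 with hB1
        set S1 := (incAux fuel (some x) B1 (J.drop 1)).1 with hS1
        set v := S1.getD k d with hv
        have hxv : x ≤ v := by
          apply incAux_mem_ge fuel x B1 (J.drop 1) v
          rw [hv, List.getD_eq_getElem _ _ hk]
          exact List.getElem_mem hk
        have hIH : B1.countP (eligU (some x)) ≤
            B1.countP (fun b => decide (v ≤ b)) + k := ih (some x) B1 (J.drop 1) d k hk
        have e1 : B1.countP (eligU (some x))
            = (B.erase x).countP (fun b => decide (x ≤ b))
              + (J.take 1).countP (fun b => decide (x ≤ b)) := by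
          rw [hB1, List.countP_append]
          congr 1
        have e2 : B1.countP (fun b => decide (v ≤ b))
            = (B.erase x).countP (fun b => decide (v ≤ b))
              + (J.take 1).countP (fun b => decide (v ≤ b)) := by
          rw [hB1, List.countP_append]
        have a1 : B.countP (eligU last?) ≤ (B.erase x).countP (eligU last?) + 1 := by
          rw [(List.perm_cons_erase hmem).countP_eq]
          simp only [List.countP_cons]
          split <;> omega
        have a1' : (B.erase x).countP (eligU last?)
            ≤ (B.erase x).countP (fun b => decide (x ≤ b)) :=
          List.countP_mono_left
            (fun b hb hp => decide_eq_true (hmin b (List.mem_of_mem_erase hb) hp))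
        have a2 : (J.take 1).countP (fun b => decide (v ≤ b))
            ≤ (J.take 1).countP (fun b => decide (x ≤ b)) :=
          List.countP_mono_left
            (fun b _ hp => decide_eq_true (le_trans hxv (of_decide_eq_true hp)))
        have a3 : (B.erase x).countP (fun b => decide (v ≤ b))
            ≤ B.countP (fun b => decide (v ≤ b)) :=
          (List.erase_sublist (a := x) (l := B)).countP_le
        omega

lemma decAux_count : ∀ (fuel : ℕ) (last? : Option α) (B J : List α) (d : α) (k : ℕ),
    k < (decAux fuel last? B J).1.length →
    B.countP (eligD last?) ≤
      B.countP (fun b => decide (b ≤ (decAux fuel last? B J).1.getD k d)) + k := by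
  intro fuel
  induction fuel with
  | zero => intro last? B J d k hk; simp [decAux] at hk
  | succ fuel ih =>
    intro last? B J d k hk
    rcases hx : nextDown last? B with _ | x
    · rw [decAux_succ_none hx] at hk; simp at hk
    · rw [decAux_succ_some hx] at hk ⊢
      obtain ⟨hmem, helig, hmax⟩ := nextDown_some hx
      cases k with
      | zero =>
        simp only [List.getD_cons_zero, Nat.add_zero]
        exact List.countP_mono_left
          (fun b hb hp => decide_eq_true (hmax b hb hp))
      | succ k =>
        simp only [List.length_cons, Nat.add_lt_add_iff_right] at hk
        simp only [List.getD_cons_succ]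
        set B1 := B.erase x ++ J.take 1 with hB1
        set S1 := (decAux fuel (some x) B1 (J.drop 1)).1 with hS1
        set v := S1.getD k d with hv
        have hxv : v ≤ x := by
          apply decAux_mem_le fuel x B1 (J.drop 1) v
          rw [hv, List.getD_eq_getElem _ _ hk]
          exact List.getElem_mem hk
        have hIH : B1.countP (eligD (some x)) ≤
            B1.countP (fun b => decide (b ≤ v)) + k := ih (some x) B1 (J.drop 1) d k hk
        have e1 : B1.countP (eligD (some x))
            = (B.erase x).countP (fun b => decide (b ≤ x))
              + (J.take 1).countP (fun b => decide (b ≤ x)) := by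
          rw [hB1, List.countP_append]
          congr 1
        have e2 : B1.countP (fun b => decide (b ≤ v))
            = (B.erase x).countP (fun b => decide (b ≤ v))
              + (J.take 1).countP (fun b => decide (b ≤ v)) := by
          rw [hB1, List.countP_append]
        have a1 : B.countP (eligD last?) ≤ (B.erase x).countP (eligD last?) + 1 := by
          rw [(List.perm_cons_erase hmem).countP_eq]
          simp only [List.countP_cons]
          split <;> omega
        have a1' : (B.erase x).countP (eligD last?)
            ≤ (B.erase x).countP (fun b => decide (b ≤ x)) :=
          List.countP_mono_left
            (fun b hb hp => decide_eq_true (hmax b (List.mem_of_mem_erase hb) hp))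
        have a2 : (J.take 1).countP (fun b => decide (b ≤ v))
            ≤ (J.take 1).countP (fun b => decide (b ≤ x)) :=
          List.countP_mono_left
            (fun b _ hp => decide_eq_true (le_trans (of_decide_eq_true hp) hxv))
        have a3 : (B.erase x).countP (fun b => decide (b ≤ v))
            ≤ B.countP (fun b => decide (b ≤ v)) :=
          (List.erase_sublist (a := x) (l := B)).countP_le
        omega

/-- persistence: eligible buffered elements and eligible ingested elements get written -/
lemma incAux_persist : ∀ (fuel : ℕ) (last? : Option α) (B J : List α) (d : α) (n : ℕ),
    B.length + J.length ≤ fuel →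
    n ≤ (incAux fuel last? B J).1.length → n ≤ J.length →
    B.countP (eligU last?) + (List.range n).countP
        (fun k => decide ((incAux fuel last? B J).1.getD k d ≤ J.getD k d))
      ≤ (incAux fuel last? B J).1.length := by
  intro fuel
  induction fuel with
  | zero =>
    intro last? B J d n hfuel hn1 hn2
    have hB : B = [] := List.length_eq_zero_iff.1 (by omega)
    subst hB
    simp only [incAux, List.length_nil] at hn1 ⊢
    interval_cases n
    simp
  | succ fuel ih =>
    intro last? B J d n hfuel hn1 hn2
    rcases hx : nextUp last? B with _ | x
    · rw [incAux_succ_none hx] at hn1 ⊢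
      simp only [List.length_nil] at hn1
      interval_cases n
      simp [nextUp_none hx]
    · rw [incAux_succ_some hx] at hn1 ⊢
      obtain ⟨hmem, helig, hmin⟩ := nextUp_some hx
      have hBpos : 1 ≤ B.length := List.length_pos_iff.2 (List.ne_nil_of_mem hmem)
      have a1 : B.countP (eligU last?) ≤ (B.erase x).countP (eligU last?) + 1 := by
        rw [(List.perm_cons_erase hmem).countP_eq]
        simp only [List.countP_cons]
        split <;> omega
      have a1' : (B.erase x).countP (eligU last?)
          ≤ (B.erase x).countP (eligU (some x)) :=
        List.countP_mono_left
          (fun b hb hp => decide_eq_true (hmin b (List.mem_of_mem_erase hb) hp))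
      cases n with
      | zero =>
        have hfuel' : (B.erase x ++ J.take 1).length + (J.drop 1).length ≤ fuel := by
          simp only [List.length_append, List.length_erase_of_mem hmem,
            List.length_take, List.length_drop]
          omega
        have hIH := ih (some x) (B.erase x ++ J.take 1) (J.drop 1) d 0 hfuel'
          (Nat.zero_le _) (Nat.zero_le _)
        rw [List.countP_append] at hIH
        simp only [List.range_zero, List.countP_nil, Nat.add_zero,
          List.length_cons] at hIH ⊢
        omega
      | succ n =>
        rcases J with _ | ⟨j, Jt⟩
        · simp at hn2
        simp only [List.take_succ_cons, List.take_zero, List.drop_succ_cons,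
          List.drop_zero, List.length_cons, Nat.add_le_add_iff_right] at hn1 hfuel hn2 ⊢
        have hfuel' : (B.erase x ++ [j]).length + Jt.length ≤ fuel := by
          simp only [List.length_append, List.length_erase_of_mem hmem,
            List.length_singleton]
          omega
        have hIH := ih (some x) (B.erase x ++ [j]) Jt d n hfuel' hn1 hn2
        rw [List.countP_append] at hIH
        have hsplit : (List.range (n + 1)).countP
            (fun k => decide ((x :: (incAux fuel (some x) (B.erase x ++ [j]) Jt).1).getD k d
              ≤ (j :: Jt).getD k d))
            = (List.range n).countP
              (fun k => decide ((incAux fuel (some x) (B.erase x ++ [j]) Jt).1.getD k d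
                ≤ Jt.getD k d))
              + (if decide (x ≤ j) then 1 else 0) := by
          rw [List.range_succ_eq_map, List.countP_cons, List.countP_map]
          simp only [Function.comp_def, List.getD_cons_succ, List.getD_cons_zero]
        rw [hsplit]
        have hj1 : ([j] : List α).countP (eligU (some x))
            = (if decide (x ≤ j) then 1 else 0) := by
          simp [List.countP_cons]
        rw [hj1] at hIH
        rcases hd : decide (x ≤ j) <;>
          simp only [hd, if_true, if_false, Bool.false_eq_true, ite_true, ite_false] at hIH ⊢ <;>
          omega

lemma decAux_persist : ∀ (fuel : ℕ) (last? : Option α) (B J : List α) (d : α) (n : ℕ),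
    B.length + J.length ≤ fuel →
    n ≤ (decAux fuel last? B J).1.length → n ≤ J.length →
    B.countP (eligD last?) + (List.range n).countP
        (fun k => decide (J.getD k d ≤ (decAux fuel last? B J).1.getD k d))
      ≤ (decAux fuel last? B J).1.length := by
  intro fuel
  induction fuel with
  | zero =>
    intro last? B J d n hfuel hn1 hn2
    have hB : B = [] := List.length_eq_zero_iff.1 (by omega)
    subst hB
    simp only [decAux, List.length_nil] at hn1 ⊢
    interval_cases n
    simp
  | succ fuel ih =>
    intro last? B J d n hfuel hn1 hn2
    rcases hx : nextDown last? B with _ | x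
    · rw [decAux_succ_none hx] at hn1 ⊢
      simp only [List.length_nil] at hn1
      interval_cases n
      simp [nextDown_none hx]
    · rw [decAux_succ_some hx] at hn1 ⊢
      obtain ⟨hmem, helig, hmax⟩ := nextDown_some hx
      have hBpos : 1 ≤ B.length := List.length_pos_iff.2 (List.ne_nil_of_mem hmem)
      have a1 : B.countP (eligD last?) ≤ (B.erase x).countP (eligD last?) + 1 := by
        rw [(List.perm_cons_erase hmem).countP_eq]
        simp only [List.countP_cons]
        split <;> omega
      have a1' : (B.erase x).countP (eligD last?)
          ≤ (B.erase x).countP (eligD (some x)) :=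
        List.countP_mono_left
          (fun b hb hp => decide_eq_true (hmax b (List.mem_of_mem_erase hb) hp))
      cases n with
      | zero =>
        have hfuel' : (B.erase x ++ J.take 1).length + (J.drop 1).length ≤ fuel := by
          simp only [List.length_append, List.length_erase_of_mem hmem,
            List.length_take, List.length_drop]
          omega
        have hIH := ih (some x) (B.erase x ++ J.take 1) (J.drop 1) d 0 hfuel'
          (Nat.zero_le _) (Nat.zero_le _)
        rw [List.countP_append] at hIH
        simp only [List.range_zero, List.countP_nil, Nat.add_zero,
          List.length_cons] at hIH ⊢
        omega
      | succ n =>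
        rcases J with _ | ⟨j, Jt⟩
        · simp at hn2
        simp only [List.take_succ_cons, List.take_zero, List.drop_succ_cons,
          List.drop_zero, List.length_cons, Nat.add_le_add_iff_right] at hn1 hfuel hn2 ⊢
        have hfuel' : (B.erase x ++ [j]).length + Jt.length ≤ fuel := by
          simp only [List.length_append, List.length_erase_of_mem hmem,
            List.length_singleton]
          omega
        have hIH := ih (some x) (B.erase x ++ [j]) Jt d n hfuel' hn1 hn2
        rw [List.countP_append] at hIH
        have hsplit : (List.range (n + 1)).countP
            (fun k => decide ((j :: Jt).getD k d
              ≤ (x :: (decAux fuel (some x) (B.erase x ++ [j]) Jt).1).getD k d))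
            = (List.range n).countP
              (fun k => decide (Jt.getD k d
                ≤ (decAux fuel (some x) (B.erase x ++ [j]) Jt).1.getD k d))
              + (if decide (j ≤ x) then 1 else 0) := by
          rw [List.range_succ_eq_map, List.countP_cons, List.countP_map]
          simp only [Function.comp_def, List.getD_cons_succ, List.getD_cons_zero]
        rw [hsplit]
        have hj1 : ([j] : List α).countP (eligD (some x))
            = (if decide (j ≤ x) then 1 else 0) := by
          simp [List.countP_cons]
        rw [hj1] at hIH
        rcases hd : decide (j ≤ x) <;>
          simp only [hd, if_true, if_false, Bool.false_eq_true, ite_true, ite_false] at hIH ⊢ <;>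
          omega

/-! dir-level wrappers -/

lemma dirState_snd (d : Bool) (B J : List α) :
    (dirState d B J).2 = J.drop (dirRun d B J).length := by
  cases d
  · exact (decAux_state _ _ _ _).1
  · exact (incAux_state _ _ _ _).1

lemma dirState_len (d : Bool) (B J : List α) :
    (dirRun d B J).length + (dirState d B J).1.length
      = B.length + min (dirRun d B J).length J.length := by
  cases d
  · exact (decAux_state _ _ _ _).2
  · exact (incAux_state _ _ _ _).2

lemma dirRun_length_ge (d : Bool) (B J : List α) : B.length ≤ (dirRun d B J).length := by
  rcases B with _ | ⟨b, B'⟩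
  · simp
  cases d
  · have := decAux_persist (((b :: B') : List α).length + J.length) none (b :: B') J
      b 0 le_rfl (Nat.zero_le _) (Nat.zero_le _)
    simpa [countP_eligD_none, maxDecRun, dirRun] using this
  · have := incAux_persist (((b :: B') : List α).length + J.length) none (b :: B') J
      b 0 le_rfl (Nat.zero_le _) (Nat.zero_le _)
    simpa [countP_eligU_none, maxIncRun, dirRun] using this

/-- the key per-step bound -/
lemma greedy_step_bound (B J : List α) (hB : B ≠ []) (M : ℕ) (hBM : B.length = M)
    (hJ : M / 2 ≤ J.length) (d : Bool)
    (hlen : (dirRun (!d) B J).length ≤ (dirRun d B J).length) :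
    M + (M / 2 + 1) / 2 ≤ (dirRun d B J).length := by
  set d0 := B.head hB with hd0
  set S := (incAux (B.length + J.length) none B J).1 with hS
  set T := (decAux (B.length + J.length) none B J).1 with hT
  have hcU : B.countP (eligU none) = M := by rw [countP_eligU_none, hBM]
  have hcD : B.countP (eligD none) = M := by rw [countP_eligD_none, hBM]
  have hSM : M ≤ S.length := by
    have := incAux_persist (B.length + J.length) none B J d0 0 le_rfl
      (Nat.zero_le _) (Nat.zero_le _)
    simpa [hcU] using this
  have hTM : M ≤ T.length := by
    have := decAux_persist (B.length + J.length) none B J d0 0 le_rfl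
      (Nat.zero_le _) (Nat.zero_le _)
    simpa [hcD] using this
  have hkey : ∀ k, k < M / 2 → S.getD k d0 ≤ T.getD k d0 := by
    intro k hk
    by_contra hcon
    push_neg at hcon
    have hkM : k < M := lt_of_lt_of_le hk (Nat.div_le_self M 2)
    have h1 := incAux_count (B.length + J.length) none B J d0 k (lt_of_lt_of_le hkM hSM)
    have h2 := decAux_count (B.length + J.length) none B J d0 k (lt_of_lt_of_le hkM hTM)
    rw [hcU] at h1
    rw [hcD] at h2
    simp only [← hS] at h1
    simp only [← hT] at h2
    have hdisj := countP_disjoint (fun b => decide (S.getD k d0 ≤ b))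
      (fun b => decide (b ≤ T.getD k d0)) B
      (fun a _ hp hq => absurd (le_trans (of_decide_eq_true hp) (of_decide_eq_true hq))
        (not_le.2 hcon))
    rw [hBM] at hdisj
    omega
  have hmle1 : M / 2 ≤ S.length := le_trans (Nat.div_le_self M 2) hSM
  have hmle2 : M / 2 ≤ T.length := le_trans (Nat.div_le_self M 2) hTM
  have hSU := incAux_persist (B.length + J.length) none B J d0 (M / 2) le_rfl hmle1 hJ
  have hTD := decAux_persist (B.length + J.length) none B J d0 (M / 2) le_rfl hmle2 hJ
  rw [hcU] at hSU
  rw [hcD] at hTD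
  simp only [← hS] at hSU
  simp only [← hT] at hTD
  have hsum : M / 2 ≤ (List.range (M / 2)).countP
        (fun k => decide (S.getD k d0 ≤ J.getD k d0))
      + (List.range (M / 2)).countP (fun k => decide (J.getD k d0 ≤ T.getD k d0)) := by
    have hlen' := List.length_eq_countP_add_countP
      (fun k => decide (S.getD k d0 ≤ J.getD k d0)) (l := List.range (M / 2))
    have hmono : (List.range (M / 2)).countP
          (fun k => decide ¬((fun k => decide (S.getD k d0 ≤ J.getD k d0)) k = true))
        ≤ (List.range (M / 2)).countP (fun k => decide (J.getD k d0 ≤ T.getD k d0)) := by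
      apply List.countP_mono_left
      intro k hkmem hp
      have hk : k < M / 2 := List.mem_range.1 hkmem
      have hnot : ¬ (S.getD k d0 ≤ J.getD k d0) := by simpa using hp
      exact decide_eq_true (le_trans (le_of_lt (not_le.1 hnot)) (hkey k hk))
    rw [List.length_range] at hlen'
    beta_reduce at hlen' hmono
    omega
  cases d
  · have hgoal : dirRun false B J = T := rfl
    have hother : dirRun (!false) B J = S := rfl
    rw [hgoal]
    rw [hother, hgoal] at hlen
    omega
  · have hgoal : dirRun true B J = S := rfl
    have hother : dirRun (!true) B J = T := rfl
    rw [hgoal]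
    rw [hother, hgoal] at hlen
    omega

lemma greedy_final {B : List α} {P : List (List α)} (h : GreedyRuns B ([] : List α) P) :
    P.length ≤ 1 := by
  cases h with
  | nil => simp
  | step =>
    rename_i d' P2 hB2 hlen2 h2'
    have hr := dirRun_length_ge d' B ([] : List α)
    have hl := dirState_len d' B ([] : List α)
    have hs := dirState_snd d' B ([] : List α)
    have hB' : (dirState d' B ([] : List α)).1 = [] := by
      rw [← List.length_eq_zero_iff]
      simp only [List.length_nil, Nat.min_zero] at hl
      omega
    have hJ' : (dirState d' B ([] : List α)).2 = [] := by
      rw [hs]; simp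
    rw [hB', hJ'] at h2'
    simp only [List.length_cons]
    have hP2 : P2 = [] := by
      cases h2' with
      | nil => rfl
      | step => simp_all
    subst hP2
    simp

lemma greedy_main {B J : List α} {P : List (List α)} (h : GreedyRuns B J P) (M : ℕ)
    (hM : 0 < M) :
    B.length = min M (B.length + J.length) →
    ∀ i : ℕ, i + 2 < P.length → M + (M / 2 + 1) / 2 ≤ (P.getD i []).length := by
  induction h with
  | nil => intro _ i hi; simp at hi
  | step d B J P hB hlen h2 ih =>
    intro hinv i hi
    have hr := dirRun_length_ge d B J
    have hl := dirState_len d B J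
    have hs : (dirState d B J).2.length = J.length - (dirRun d B J).length := by
      rw [dirState_snd]; simp
    cases i with
    | zero =>
      simp only [List.length_cons] at hi
      simp only [List.getD_cons_zero]
      by_cases hJm : M / 2 ≤ J.length
      · have hBpos : 0 < B.length := List.length_pos_iff.2 hB
        have hBM : B.length = M := by omega
        exact greedy_step_bound B J hB M hBM hJm d hlen
      · exfalso
        have hJ'0 : (dirState d B J).2.length = 0 := by omega
        have hJ' : (dirState d B J).2 = [] := List.length_eq_zero_iff.1 hJ'0
        rw [hJ'] at h2
        have := greedy_final h2
        omega
    | succ i =>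
      simp only [List.getD_cons_succ]
      simp only [List.length_cons] at hi
      exact ih (by omega) i (by omega)

end StmtNine

/-- Every run written by the greedy run-generation algorithm with buffer size `M`, except
possibly its last two runs, has length at least `M + ⌈⌊M/2⌋/2⌉`. -/
theorem stmt_9 {α : Type*} [LinearOrder α] (M : ℕ) (hM : 0 < M) (I : List α)
    (P : List (List α)) (hP : GreedyRuns (I.take M) (I.drop M) P) :
    ∀ i : ℕ, i + 2 < P.length → M + (M / 2 + 1) / 2 ≤ (P.getD i []).length := by
  apply StmtNine.greedy_main hP M hM
  simp only [List.length_take, List.length_drop]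
  omega
end

section
/- Let I be an input with pairwise distinct elements and buffer size M. Let r_1 be the maximal increasing run and r_2 the maximal decreasing run from the initial state (the first M elements of I in the buffer, the rest remaining). Then |r_1| < 3M or |r_2| < 3M. -/
namespace RunGen
section Helpers
variable {α : Type*} [LinearOrder α]

lemma nextUp_mem {l? : Option α} {B : List α} {x : α} (h : nextUp l? B = some x) : x ∈ B := by
  cases l? with
  | none => exact List.min?_mem h
  | some l => exact (List.mem_filter.mp (List.min?_mem h)).1

lemma nextUp_le {l : α} {B : List α} {x : α} (h : nextUp (some l) B = some x) : l ≤ x := by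
  have hx := List.min?_mem h
  have := (List.mem_filter.mp hx).2
  exact of_decide_eq_true this

lemma nextDown_mem {l? : Option α} {B : List α} {x : α} (h : nextDown l? B = some x) : x ∈ B := by
  cases l? with
  | none => exact List.max?_mem h
  | some l => exact (List.mem_filter.mp (List.max?_mem h)).1

lemma nextDown_ge {l : α} {B : List α} {x : α} (h : nextDown (some l) B = some x) : x ≤ l := by
  have hx := List.max?_mem h
  exact of_decide_eq_true (List.mem_filter.mp hx).2

lemma incAux_chain : ∀ (fuel : ℕ) (l : α) (B J : List α),
    List.Chain (· ≤ ·) l (incAux fuel (some l) B J).1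
  | 0, l, B, J => by simp [incAux, List.Chain]
  | fuel+1, l, B, J => by
    cases h : nextUp (some l) B with
    | none => simp [incAux, h, List.Chain]
    | some x =>
      simp only [incAux, h]
      exact List.Chain.cons (nextUp_le h) (incAux_chain fuel x _ _)

lemma incAux_chain' (fuel : ℕ) (l? : Option α) (B J : List α) :
    ((incAux fuel l? B J).1).Chain' (· ≤ ·) := by
  cases fuel with
  | zero => simp [incAux, List.Chain']
  | succ fuel =>
    cases h : nextUp l? B with
    | none => simp [incAux, h, List.Chain']
    | some x =>
      simp only [incAux, h]
      exact incAux_chain fuel x _ _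

lemma incAux_length (fuel : ℕ) (l? : Option α) (B J : List α) :
    (incAux fuel l? B J).1.length ≤ fuel := by
  induction fuel generalizing l? B J with
  | zero => simp [incAux]
  | succ fuel ih =>
    cases h : nextUp l? B with
    | none => simp [incAux, h]
    | some x =>
      simp only [incAux, h, List.length_cons]
      exact Nat.succ_le_succ (ih _ _ _)

lemma incAux_take_le : ∀ (fuel : ℕ) (l? : Option α) (B J : List α) (t : ℕ),
    ((incAux fuel l? B J).1.take (t+1) : Multiset α) ≤ (B : Multiset α) + (J.take t : List α)
  | 0, l?, B, J, t => by simp [incAux]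
  | fuel+1, l?, B, J, t => by
    cases h : nextUp l? B with
    | none => simp [incAux, h]
    | some x =>
      have hxB : x ∈ B := nextUp_mem h
      simp only [incAux, h]
      match t with
      | 0 =>
        rw [List.take_succ_cons, List.take_zero]
        simpa using hxB
      | Nat.succ t' =>
        rw [List.take_succ_cons]
        have ih := incAux_take_le fuel (some x) (B.erase x ++ J.take 1) (J.drop 1) t'
        have hJ : ((J.take 1 : List α) : Multiset α) + ((J.drop 1).take t' : List α) =
            ((J.take (t'+1) : List α) : Multiset α) := by
          rw [show t'+1 = 1+t' by omega, List.take_add, ← Multiset.coe_add]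
        have ih2 : ((incAux fuel (some x) (B.erase x ++ J.take 1) (J.drop 1)).1.take (t'+1) : Multiset α)
            ≤ ((B.erase x : List α) : Multiset α) + (J.take (t'+1) : List α) := by
          calc _ ≤ ((B.erase x ++ J.take 1 : List α) : Multiset α) + ((J.drop 1).take t' : List α) := ih
          _ = ((B.erase x : List α) : Multiset α) + (((J.take 1 : List α) : Multiset α) + ((J.drop 1).take t' : List α)) := by
              simp [← Multiset.coe_add, add_assoc]
          _ = _ := by rw [hJ]
        calc ((x :: (incAux fuel (some x) (B.erase x ++ J.take 1) (J.drop 1)).1.take (t'+1) : List α) : Multiset α)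
            = x ::ₘ ((incAux fuel (some x) (B.erase x ++ J.take 1) (J.drop 1)).1.take (t'+1) : List α) := rfl
          _ ≤ x ::ₘ (((B.erase x : List α) : Multiset α) + (J.take (t'+1) : List α)) :=
              Multiset.cons_le_cons x ih2
          _ = (x ::ₘ ((B.erase x : List α) : Multiset α)) + (J.take (t'+1) : List α) := by
              rw [Multiset.cons_add]
          _ = ((B : List α) : Multiset α) + (J.take (t'+1) : List α) := by
              rw [← Multiset.coe_erase, Multiset.cons_erase (by exact hxB)]

lemma decAux_chain : ∀ (fuel : ℕ) (l : α) (B J : List α),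
    List.Chain (· ≥ ·) l (decAux fuel (some l) B J).1
  | 0, l, B, J => by simp [decAux, List.Chain]
  | fuel+1, l, B, J => by
    cases h : nextDown (some l) B with
    | none => simp [decAux, h, List.Chain]
    | some x =>
      simp only [decAux, h]
      exact List.Chain.cons (nextDown_ge h) (decAux_chain fuel x _ _)

lemma decAux_chain' (fuel : ℕ) (l? : Option α) (B J : List α) :
    ((decAux fuel l? B J).1).Chain' (· ≥ ·) := by
  cases fuel with
  | zero => simp [decAux, List.Chain']
  | succ fuel =>
    cases h : nextDown l? B with
    | none => simp [decAux, h, List.Chain']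
    | some x =>
      simp only [decAux, h]
      exact decAux_chain fuel x _ _

lemma decAux_length (fuel : ℕ) (l? : Option α) (B J : List α) :
    (decAux fuel l? B J).1.length ≤ fuel := by
  induction fuel generalizing l? B J with
  | zero => simp [decAux]
  | succ fuel ih =>
    cases h : nextDown l? B with
    | none => simp [decAux, h]
    | some x =>
      simp only [decAux, h, List.length_cons]
      exact Nat.succ_le_succ (ih _ _ _)

lemma decAux_take_le : ∀ (fuel : ℕ) (l? : Option α) (B J : List α) (t : ℕ),
    ((decAux fuel l? B J).1.take (t+1) : Multiset α) ≤ (B : Multiset α) + (J.take t : List α)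
  | 0, l?, B, J, t => by simp [decAux]
  | fuel+1, l?, B, J, t => by
    cases h : nextDown l? B with
    | none => simp [decAux, h]
    | some x =>
      have hxB : x ∈ B := nextDown_mem h
      simp only [decAux, h]
      match t with
      | 0 =>
        rw [List.take_succ_cons, List.take_zero]
        simpa using hxB
      | Nat.succ t' =>
        rw [List.take_succ_cons]
        have ih := decAux_take_le fuel (some x) (B.erase x ++ J.take 1) (J.drop 1) t'
        have hJ : ((J.take 1 : List α) : Multiset α) + ((J.drop 1).take t' : List α) =
            ((J.take (t'+1) : List α) : Multiset α) := by
          rw [show t'+1 = 1+t' by omega, List.take_add, ← Multiset.coe_add]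
        have ih2 : ((decAux fuel (some x) (B.erase x ++ J.take 1) (J.drop 1)).1.take (t'+1) : Multiset α)
            ≤ ((B.erase x : List α) : Multiset α) + (J.take (t'+1) : List α) := by
          calc _ ≤ ((B.erase x ++ J.take 1 : List α) : Multiset α) + ((J.drop 1).take t' : List α) := ih
          _ = ((B.erase x : List α) : Multiset α) + (((J.take 1 : List α) : Multiset α) + ((J.drop 1).take t' : List α)) := by
              simp [← Multiset.coe_add, add_assoc]
          _ = _ := by rw [hJ]
        calc ((x :: (decAux fuel (some x) (B.erase x ++ J.take 1) (J.drop 1)).1.take (t'+1) : List α) : Multiset α)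
            = x ::ₘ ((decAux fuel (some x) (B.erase x ++ J.take 1) (J.drop 1)).1.take (t'+1) : List α) := rfl
          _ ≤ x ::ₘ (((B.erase x : List α) : Multiset α) + (J.take (t'+1) : List α)) :=
              Multiset.cons_le_cons x ih2
          _ = (x ::ₘ ((B.erase x : List α) : Multiset α)) + (J.take (t'+1) : List α) := by
              rw [Multiset.cons_add]
          _ = ((B : List α) : Multiset α) + (J.take (t'+1) : List α) := by
              rw [← Multiset.coe_erase, Multiset.cons_erase (by exact hxB)]

end Helpers
end RunGen

namespace RunGen
section Main
variable {α : Type*} [LinearOrder α]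

lemma rg_getElem_mem_take {l : List α} {i n : ℕ} (hi : i < l.length) (hin : i < n) :
    l[i] ∈ l.take n := by
  have h2 : i < (l.take n).length := by rw [List.length_take]; omega
  have h3 : (l.take n)[i] = l[i] := List.getElem_take
  rw [← h3]; exact List.getElem_mem h2

lemma rg_exists_of_mem_take {l : List α} {n : ℕ} {x : α} (h : x ∈ l.take n) :
    ∃ i, ∃ _h' : i < l.length, i < n ∧ l[i] = x := by
  obtain ⟨i, hi, hix⟩ := List.mem_iff_getElem.mp h
  rw [List.length_take] at hi
  refine ⟨i, by omega, by omega, ?_⟩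
  rw [← hix]; exact (List.getElem_take).symm

end Main
end RunGen

open RunGen

/-- For an input `I` with pairwise distinct elements and buffer size `M`, letting `r₁` and
`r₂` be the maximal increasing and maximal decreasing runs from the initial state (first
`M` elements buffered, rest remaining), we have `|r₁| < 3M` or `|r₂| < 3M`. -/
theorem stmt_10 {α : Type*} [LinearOrder α] (M : ℕ) (hM : 0 < M) (I : List α)
    (hI : I.Nodup) :
    (maxIncRun (I.take M) (I.drop M)).length < 3 * M ∨
    (maxDecRun (I.take M) (I.drop M)).length < 3 * M := by
  by_contra hcon
  push_neg at hcon
  obtain ⟨h1, h2⟩ := hcon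
  set B := I.take M with hBdef
  set J := I.drop M with hJdef
  set r := maxIncRun B J with hrdef
  set d := maxDecRun B J with hddef
  have hBJ : (B ++ J).Nodup := by rw [hBdef, hJdef, List.take_append_drop]; exact hI
  have hJnd : J.Nodup := hBJ.of_append_right
  have hBlen : B.length ≤ M := by rw [hBdef, List.length_take]; omega
  -- prefix multiset facts
  have hrm : ∀ t : ℕ, ((r.take (t+1) : List α) : Multiset α)
      ≤ (↑B + ↑(J.take t) : Multiset α) := fun t => incAux_take_le _ none B J t
  have hdm : ∀ t : ℕ, ((d.take (t+1) : List α) : Multiset α)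
      ≤ (↑B + ↑(J.take t) : Multiset α) := fun t => decAux_take_le _ none B J t
  have hrmem : ∀ t x, x ∈ r.take (t+1) → x ∈ B ++ J.take t := by
    intro t x hx
    have := Multiset.mem_of_le (hrm t) (Multiset.mem_coe.mpr hx)
    rw [Multiset.coe_add, Multiset.mem_coe] at this
    exact this
  have hdmem : ∀ t x, x ∈ d.take (t+1) → x ∈ B ++ J.take t := by
    intro t x hx
    have := Multiset.mem_of_le (hdm t) (Multiset.mem_coe.mpr hx)
    rw [Multiset.coe_add, Multiset.mem_coe] at this
    exact this
  -- whole-run multiset containment and nodup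
  have hrlen_le : r.length ≤ B.length + J.length := incAux_length _ none B J
  have hdlen_le : d.length ≤ B.length + J.length := decAux_length _ none B J
  have hrsub : ((r : List α) : Multiset α) ≤ ↑(B ++ J) := by
    have h := hrm (B.length + J.length)
    rw [List.take_of_length_le (by omega), List.take_of_length_le (by omega),
      Multiset.coe_add] at h
    exact h
  have hdsub : ((d : List α) : Multiset α) ≤ ↑(B ++ J) := by
    have h := hdm (B.length + J.length)
    rw [List.take_of_length_le (by omega), List.take_of_length_le (by omega),
      Multiset.coe_add] at h
    exact h
  have hrnd : r.Nodup := Multiset.coe_nodup.mp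
    (Multiset.nodup_of_le hrsub (Multiset.coe_nodup.mpr hBJ))
  have hdnd : d.Nodup := Multiset.coe_nodup.mp
    (Multiset.nodup_of_le hdsub (Multiset.coe_nodup.mpr hBJ))
  -- strict monotonicity
  have hrch : r.Chain' (· ≤ ·) := incAux_chain' _ none B J
  have hdch : d.Chain' (· ≥ ·) := decAux_chain' _ none B J
  have hrp : r.Pairwise (· < ·) :=
    ((List.isChain_iff_pairwise.mp hrch).and hrnd).imp (fun h => lt_of_le_of_ne h.1 h.2)
  have hdp : d.Pairwise (fun a b => b < a) :=
    ((List.isChain_iff_pairwise.mp hdch).and hdnd).imp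
      (fun h => lt_of_le_of_ne h.1 (Ne.symm h.2))
  have hrlt : ∀ {i j : ℕ} (hi : i < r.length) (hj : j < r.length), i < j →
      r[i] < r[j] := fun hi hj hij => List.pairwise_iff_getElem.mp hrp _ _ hi hj hij
  have hdlt : ∀ {i j : ℕ} (hi : i < d.length) (hj : j < d.length), i < j →
      d[j] < d[i] := fun hi hj hij => List.pairwise_iff_getElem.mp hdp _ _ hi hj hij
  -- all elements of r.take (s+1) are ≤ r[s]
  have hrbound : ∀ (s : ℕ) (hs : s < r.length) (x : α), x ∈ r.take (s+1) → x ≤ r[s] := by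
    intro s hs x hx
    obtain ⟨i, hi, hin, hix⟩ := rg_exists_of_mem_take hx
    rcases Nat.lt_or_ge i s with h | h
    · rw [← hix]; exact le_of_lt (hrlt hi hs h)
    · have : i = s := by omega
      subst this; rw [hix]
  have hdbound : ∀ (s : ℕ) (hs : s < d.length) (x : α), x ∈ d.take (s+1) → d[s] ≤ x := by
    intro s hs x hx
    obtain ⟨i, hi, hin, hix⟩ := rg_exists_of_mem_take hx
    rcases Nat.lt_or_ge i s with h | h
    · rw [← hix]; exact le_of_lt (hdlt hi hs h)
    · have : i = s := by omega
      subst this; rw [hix]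
  -- Claim 3: crossing
  have cross : ∀ (s : ℕ) (hsr : s < r.length) (hsd : s < d.length), M ≤ s →
      d[s] < r[s] := by
    intro s hsr hsd hMs
    by_contra hc
    push_neg at hc
    classical
    set F1 := (r.take (s+1)).toFinset with hF1
    set F2 := (d.take (s+1)).toFinset with hF2
    set G := (B ++ J.take s).toFinset with hG
    have hF1card : F1.card = s + 1 := by
      rw [hF1, List.toFinset_card_of_nodup (hrnd.sublist (List.take_sublist _ _)),
        List.length_take]
      omega
    have hF2card : F2.card = s + 1 := by
      rw [hF2, List.toFinset_card_of_nodup (hdnd.sublist (List.take_sublist _ _)),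
        List.length_take]
      omega
    have hGcard : G.card ≤ M + s := by
      refine le_trans (List.toFinset_card_le _) ?_
      simp only [List.length_append, List.length_take]
      omega
    have hunion : F1 ∪ F2 ⊆ G := by
      intro x hx
      rcases Finset.mem_union.mp hx with h | h
      · exact List.mem_toFinset.mpr (hrmem s x (List.mem_toFinset.mp h))
      · exact List.mem_toFinset.mpr (hdmem s x (List.mem_toFinset.mp h))
    have hinter : F1 ∩ F2 ⊆ {r[s]} := by
      intro x hx
      obtain ⟨hx1, hx2⟩ := Finset.mem_inter.mp hx
      have hxle : x ≤ r[s] := hrbound s hsr x (List.mem_toFinset.mp hx1)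
      have hxge : d[s] ≤ x := hdbound s hsd x (List.mem_toFinset.mp hx2)
      have : x = r[s] := le_antisymm hxle (le_trans hc hxge)
      simp [this]
    have hce := Finset.card_union_add_card_inter F1 F2
    have hic : (F1 ∩ F2).card ≤ 1 :=
      le_trans (Finset.card_le_card hinter) (by simp)
    have huc : (F1 ∪ F2).card ≤ M + s := le_trans (Finset.card_le_card hunion) hGcard
    omega
  -- main counting
  classical
  set W1 := (r.take (3*M)).toFinset with hW1
  set W2 := (d.take (3*M)).toFinset with hW2
  have hW1card : W1.card = 3*M := by
    rw [hW1, List.toFinset_card_of_nodup (hrnd.sublist (List.take_sublist _ _)),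
      List.length_take]
    omega
  have hW2card : W2.card = 3*M := by
    rw [hW2, List.toFinset_card_of_nodup (hdnd.sublist (List.take_sublist _ _)),
      List.length_take]
    omega
  have h3M : 3*M - 1 + 1 = 3*M := by omega
  set G' := (B ++ J.take (3*M - 1)).toFinset with hG'
  have hG'card : G'.card ≤ 4*M - 1 := by
    refine le_trans (List.toFinset_card_le _) ?_
    simp only [List.length_append, List.length_take]
    omega
  have hunion : W1 ∪ W2 ⊆ G' := by
    intro x hx
    rcases Finset.mem_union.mp hx with h | h
    · refine List.mem_toFinset.mpr (hrmem (3*M-1) x ?_)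
      rw [h3M]; exact List.mem_toFinset.mp h
    · refine List.mem_toFinset.mpr (hdmem (3*M-1) x ?_)
      rw [h3M]; exact List.mem_toFinset.mp h
  have hce := Finset.card_union_add_card_inter W1 W2
  have huc : (W1 ∪ W2).card ≤ 4*M - 1 := le_trans (Finset.card_le_card hunion) hG'card
  have hintercard : 2*M + 1 ≤ (W1 ∩ W2).card := by omega
  set K := (B ++ J.take M).toFinset with hK
  have hKcard : K.card ≤ 2*M := by
    refine le_trans (List.toFinset_card_le _) ?_
    simp only [List.length_append, List.length_take]
    omega
  have hsubK : W1 ∩ W2 ⊆ K := by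
    intro e he
    obtain ⟨he1, he2⟩ := Finset.mem_inter.mp he
    by_cases heB : e ∈ B
    · exact List.mem_toFinset.mpr (List.mem_append_left _ heB)
    · have he1' : e ∈ r.take (3*M) := List.mem_toFinset.mp he1
      have he2' : e ∈ d.take (3*M) := List.mem_toFinset.mp he2
      obtain ⟨t, htr, ht3, hte⟩ := rg_exists_of_mem_take he1'
      obtain ⟨t', htd, ht3', hte'⟩ := rg_exists_of_mem_take he2'
      have heJ : e ∈ J := by
        have hmem := hrmem (3*M-1) e (by rw [h3M]; exact he1')
        exact List.mem_of_mem_take ((List.mem_append.mp hmem).resolve_left heB)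
      obtain ⟨s, hsJ, hse⟩ := List.mem_iff_getElem.mp heJ
      by_cases hsM : s < M
      · rw [← hse]
        exact List.mem_toFinset.mpr (List.mem_append_right _ (rg_getElem_mem_take hsJ hsM))
      · exfalso
        push_neg at hsM
        have hindex : ∀ (n : ℕ), e ∈ J.take n → s < n := by
          intro n hn
          obtain ⟨i, hiJ, hin, hie⟩ := rg_exists_of_mem_take hn
          have : i = s := (List.Nodup.getElem_inj_iff hJnd).mp (by rw [hie, hse])
          omega
        have hst : s < t := by
          refine hindex t ?_
          have hmem := hrmem t e (by rw [← hte]; exact rg_getElem_mem_take htr (by omega))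
          exact (List.mem_append.mp hmem).resolve_left heB
        have hst' : s < t' := by
          refine hindex t' ?_
          have hmem := hdmem t' e (by rw [← hte']; exact rg_getElem_mem_take htd (by omega))
          exact (List.mem_append.mp hmem).resolve_left heB
        have hsr : s < r.length := lt_trans hst htr
        have hsd : s < d.length := lt_trans hst' htd
        have hA : r[s] < e := by rw [← hte]; exact hrlt hsr htr hst
        have hB2 : e < d[s] := by rw [← hte']; exact hdlt hsd htd hst'
        have hC : d[s] < r[s] := cross s hsr hsd hsM
        exact lt_irrefl e (lt_trans (lt_trans hB2 hC) hA)
  have := le_trans hintercard (le_trans (Finset.card_le_card hsubK) hKcard)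
  omega
end
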